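/- Let D ⊆ ℝ with D ≠ {0}. If there exist a real number x and an element d' ∈ D \ {0} such that the set S = ⋃_{d ∈ D} { (x + d·n) mod |d'| : n ∈ ℤ } is finite, then there exists a ∈ ℝ such that D ⊆ a·ℤ. -/

import Mathlib

/-- The representative of `x` modulo `|y|` lying in `[0, |y|)` (for `y ≠ 0`). -/
noncomputable def modRep (y x : ℝ) : ℝ := x - |y| * (⌊x / |y|⌋ : ℤ)

lemma modRep_eq_iff {y : ℝ} (hy : y ≠ 0) {a b : ℝ} :
    modRep y a = modRep y b ↔ ∃ k : ℤ, a - b = k * |y| := by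
  have hy' : (0:ℝ) < |y| := abs_pos.mpr hy
  have ha : modRep y a = |y| * Int.fract (a / |y|) := by
    unfold modRep Int.fract; field_simp
  have hb : modRep y b = |y| * Int.fract (b / |y|) := by
    unfold modRep Int.fract; field_simp
  rw [ha, hb]
  constructor
  · intro hE
    have h1 : Int.fract (a / |y|) = Int.fract (b / |y|) :=
      mul_left_cancel₀ hy'.ne' hE
    obtain ⟨z, hz⟩ := Int.fract_eq_fract.mp h1
    refine ⟨z, ?_⟩
    field_simp at hz
    linarith [hz]
  · rintro ⟨k, hk⟩
    have hq : a / |y| - b / |y| = (k : ℝ) := by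
      field_simp
      linarith [hk]
    rw [Int.fract_eq_fract.mpr ⟨k, hq⟩]

lemma key_step {d' : ℝ} (hd'0 : d' ≠ 0) {d : ℝ} {N p q : ℕ} {k : ℤ}
    (hpq : p < q) (hqN : q ≤ N)
    (hk : d * q - d * p = k * |d'|) :
    ∃ n : ℤ, d = |d'| / (Nat.factorial N : ℝ) * n := by
  have hfac : (Nat.factorial N : ℝ) ≠ 0 := by
    exact_mod_cast Nat.factorial_ne_zero N
  obtain ⟨m, hm⟩ : (q - p) ∣ Nat.factorial N :=
    Nat.dvd_factorial (by omega) (by omega)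
  refine ⟨k * m, ?_⟩
  have hm' : (Nat.factorial N : ℝ) = ((q : ℝ) - p) * m := by
    have : ((q - p : ℕ) : ℝ) = (q : ℝ) - p := by
      push_cast [Nat.cast_sub hpq.le]; ring
    rw [hm]; push_cast [Nat.cast_sub hpq.le]; ring
  field_simp
  push_cast
  calc d * (Nat.factorial N : ℝ) = (d * q - d * p) * m := by rw [hm']; ring
    _ = |d'| * ((k : ℝ) * m) := by rw [hk]; ring

theorem arithmetic_lattice_lemma (D : Set ℝ) (hD : D ≠ {0})
    (h : ∃ x : ℝ, ∃ d' ∈ D, d' ≠ 0 ∧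
      (⋃ d ∈ D, {r : ℝ | ∃ n : ℤ, r = modRep d' (x + d * n)}).Finite) :
    ∃ a : ℝ, D ⊆ {r : ℝ | ∃ n : ℤ, r = a * n} := by
  classical
  obtain ⟨x, d', hd'D, hd'0, hfin⟩ := h
  set S := hfin.toFinset with hSdef
  set N := S.card with hNdef
  refine ⟨|d'| / (Nat.factorial N : ℝ), fun d hd => ?_⟩
  have hmem : ∀ n : ℕ, modRep d' (x + d * n) ∈ S := by
    intro n
    rw [hSdef, Set.Finite.mem_toFinset]
    exact Set.mem_iUnion.2 ⟨d, Set.mem_iUnion.2 ⟨hd, ⟨(n : ℤ), by push_cast; ring_nf⟩⟩⟩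
  have hcard : S.card < (Finset.range (N+1)).card := by simp; exact le_rfl
  obtain ⟨a, ha, b, hb, hab, hfab⟩ :=
    Finset.exists_ne_map_eq_of_card_lt_of_maps_to hcard (fun n _ => hmem n)
  simp only [Finset.mem_range] at ha hb
  rcases (Ne.lt_or_gt hab) with hlt | hlt
  · obtain ⟨k, hk⟩ := (modRep_eq_iff hd'0).mp hfab.symm
    have hk' : d * (b : ℕ) - d * (a : ℕ) = k * |d'| := by
      have : (x + d * b) - (x + d * a) = k * |d'| := hk
      linarith [this]
    exact key_step hd'0 hlt (by omega) hk'
  · obtain ⟨k, hk⟩ := (modRep_eq_iff hd'0).mp hfab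
    have hk' : d * (a : ℕ) - d * (b : ℕ) = k * |d'| := by
      have : (x + d * a) - (x + d * b) = k * |d'| := hk
      linarith [this]
    exact key_step hd'0 hlt (by omega) hk'
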